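/- arXiv:2407.18208 — 5 statements merged into one kernel-verified Lean document; each statement's English description precedes it below -/
import Mathlib

section
/- Let Λ be a Dedekind domain, M a finitely generated projective Λ-module of rank n, V a proper nonzero summand of M of rank k with k ≥ 2, L a rank-1 summand of V, and H a rank-(n−1) summand of M with H ⊕ L = M. Then the maps (P,Q) ↦ (P, Q ⊓ H) and (Z,W) ↦ (Z, W ⊕ L) are mutually inverse order isomorphisms between the poset X₀ = {(P,Q) ∈ S_M : P ⊆ H, Q ⊇ V} and the poset S_H(⊆, ⊇ H⊓V) = {(Z,W) : Z, W proper summands of H, Z ⊕ W = H, W ⊇ H ⊓ V}. -/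
open CategoryTheory OrderDual

/-- The rank of a finitely generated projective module over a domain: the dimension over the
fraction field of the base change to the fraction field. -/
noncomputable def rk (Λ : Type) [CommRing Λ] (M : Type) [AddCommGroup M] [Module Λ M] : ℕ :=
  Module.finrank (FractionRing Λ) (TensorProduct Λ (FractionRing Λ) M)

/-- The geometric realization (topological realization of the nerve) of a poset. -/
noncomputable def pReal (P : Type) [Preorder P] : TopCat :=
  SSet.toTop.obj (nerveFunctor.obj (Cat.of P))

/-- The map of geometric realizations induced by a map of posets. -/
noncomputable def pRealMap {P Q : Type} [Preorder P] [Preorder Q] (f : P →o Q) :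
    pReal P ⟶ pReal Q :=
  SSet.toTop.map (nerveFunctor.map f.monotone.functor.toCatHom)

/-- The base point of the `d`-dimensional sphere. -/
noncomputable def spherePt (d : ℕ) : Metric.sphere (0 : EuclideanSpace ℝ (Fin (d + 1))) 1 :=
  ⟨EuclideanSpace.single 0 1, by simp⟩

/-- The gluing relation for a wedge of spheres. -/
def WedgeRel (I : Type) (d : ℕ) :
    ((Σ _ : I, Metric.sphere (0 : EuclideanSpace ℝ (Fin (d + 1))) 1) ⊕ Unit) →
      ((Σ _ : I, Metric.sphere (0 : EuclideanSpace ℝ (Fin (d + 1))) 1) ⊕ Unit) → Prop :=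
  fun x y => ∃ i, x = Sum.inl ⟨i, spherePt d⟩ ∧ y = Sum.inr ()

/-- The wedge of `d`-dimensional spheres indexed by `I` (a one-point space if `I` is empty),
obtained by gluing the base points of all the spheres to a single point. -/
def WedgeOfSpheres (I : Type) (d : ℕ) : Type :=
  Quot (WedgeRel I d)

noncomputable instance (I : Type) (d : ℕ) : TopologicalSpace (WedgeOfSpheres I d) :=
  inferInstanceAs (TopologicalSpace (Quot (WedgeRel I d)))

/-- `X` is homotopy equivalent to a wedge of `d`-dimensional spheres
(over some, possibly empty, index set). -/
def HomotopyEquivToWedge (X : Type) [TopologicalSpace X] (d : ℕ) : Prop :=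
  ∃ I : Type, Nonempty (ContinuousMap.HomotopyEquiv X (WedgeOfSpheres I d))

section Posets

variable (Λ : Type) [CommRing Λ] (M : Type) [AddCommGroup M] [Module Λ M]

/-- The poset of pairs `(Z, W)` of proper summands of `N` with `Z ⊕ W = N`
(i.e. `Z ⊓ W = ⊥`, `Z ⊔ W = N`, `Z ≠ N`, `W ≠ N`), ordered by
`(Z, W) ≤ (Z', W')` iff `Z ⊆ Z'` and `W ⊇ W'`.  For `N = ⊤` this is the split building
poset `S_M`. -/
abbrev SPosetIn (N : Submodule Λ M) : Type :=
  {ZW : Submodule Λ M × (Submodule Λ M)ᵒᵈ //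
    ZW.1 ⊓ ofDual ZW.2 = ⊥ ∧ ZW.1 ⊔ ofDual ZW.2 = N ∧ ZW.1 ≠ N ∧ ofDual ZW.2 ≠ N}

/-- The poset `T_M` of proper nonzero summands of `M`, ordered by inclusion. -/
abbrev TPoset : Type :=
  {P : Submodule Λ M // (∃ Q, P ⊓ Q = ⊥ ∧ P ⊔ Q = ⊤) ∧ P ≠ ⊥ ∧ P ≠ ⊤}

end Posets

/-- Claim 1 (the isomorphism): `(P,Q) ↦ (P, Q ⊓ H)` and `(Z,W) ↦ (Z, W ⊔ L)` are mutually
inverse order isomorphisms `X₀ ≃o S_H(⊆, ⊇ H ⊓ V)`. -/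
theorem statement4 (Λ : Type) [CommRing Λ] [IsDedekindDomain Λ]
    (M : Type) [AddCommGroup M] [Module Λ M] [Module.Finite Λ M] [Module.Projective Λ M]
    (n : ℕ) (hn : rk Λ M = n) (k : ℕ) (V : Submodule Λ M) (hVsum : ∃ W, V ⊓ W = ⊥ ∧ V ⊔ W = ⊤)
    (hV0 : V ≠ ⊥) (hVtop : V ≠ ⊤) (hVrk : rk Λ ↥V = k) (hk2 : 2 ≤ k)
    (L : Submodule Λ M) (hLV : L ≤ V) (hLsum : ∃ L', L ⊓ L' = ⊥ ∧ L ⊔ L' = V)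
    (hLrk : rk Λ ↥L = 1)
    (H : Submodule Λ M) (hHrk : rk Λ ↥H = n - 1) (hHL : H ⊓ L = ⊥) (hHLtop : H ⊔ L = ⊤) :
    ∃ e : {x : SPosetIn Λ M ⊤ // x.1.1 ≤ H ∧ V ≤ ofDual x.1.2} ≃o
        {y : SPosetIn Λ M H // H ⊓ V ≤ ofDual y.1.2},
      (∀ x, (e x).1.1.1 = x.1.1.1 ∧ ofDual (e x).1.1.2 = ofDual x.1.1.2 ⊓ H) ∧
      (∀ y, (e.symm y).1.1.1 = y.1.1.1 ∧ ofDual (e.symm y).1.1.2 = ofDual y.1.1.2 ⊔ L) := by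
  have hVneL : V ≠ L := by
    intro h; rw [h, hLrk] at hVrk; omega
  have key1 : ∀ Q : Submodule Λ M, L ≤ Q → (Q ⊓ H) ⊔ L = Q := fun Q hLQ => by
    rw [inf_sup_assoc_of_le _ hLQ, hHLtop, inf_top_eq]
  have key2 : ∀ W : Submodule Λ M, W ≤ H → (W ⊔ L) ⊓ H = W := fun W hWH => by
    rw [sup_inf_assoc_of_le _ hWH, inf_comm L H, hHL, sup_bot_eq]
  have fwdmem : ∀ x : {x : SPosetIn Λ M ⊤ // x.1.1 ≤ H ∧ V ≤ ofDual x.1.2},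
      x.1.1.1 ⊓ (ofDual x.1.1.2 ⊓ H) = ⊥ ∧ x.1.1.1 ⊔ (ofDual x.1.1.2 ⊓ H) = H ∧
      x.1.1.1 ≠ H ∧ ofDual x.1.1.2 ⊓ H ≠ H := by
    rintro ⟨⟨⟨P, Q⟩, hmem⟩, hout⟩
    obtain ⟨h0, ht, hPt, hQt⟩ : P ⊓ ofDual Q = ⊥ ∧ P ⊔ ofDual Q = ⊤ ∧ P ≠ ⊤ ∧ ofDual Q ≠ ⊤ := hmem
    obtain ⟨hPH, hVQ⟩ : P ≤ H ∧ V ≤ ofDual Q := hout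
    refine ⟨?_, ?_, ?_, ?_⟩
    · show P ⊓ (ofDual Q ⊓ H) = ⊥
      exact le_bot_iff.mp ((le_inf inf_le_left (inf_le_right.trans inf_le_left)).trans h0.le)
    · show P ⊔ ofDual Q ⊓ H = H
      rw [← sup_inf_assoc_of_le _ hPH, ht, top_inf_eq]
    · show P ≠ H
      intro h
      have hQH : ofDual Q ⊓ H = ⊥ := by rw [← h, inf_comm]; exact h0
      have hQL : ofDual Q = L := by
        rw [← key1 (ofDual Q) (hLV.trans hVQ), hQH, bot_sup_eq]
      exact hVneL (le_antisymm (hQL ▸ hVQ) hLV)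
    · show ofDual Q ⊓ H ≠ H
      intro h
      have hHQ : H ≤ ofDual Q := inf_eq_right.mp h
      have hP : P = ⊥ := le_bot_iff.mp ((le_inf le_rfl (hPH.trans hHQ)).trans h0.le)
      exact hQt (top_le_iff.mp (by rw [← ht, hP, bot_sup_eq]))
  have bwdmem : ∀ y : {y : SPosetIn Λ M H // H ⊓ V ≤ ofDual y.1.2},
      (y.1.1.1 ⊓ (ofDual y.1.1.2 ⊔ L) = ⊥ ∧ y.1.1.1 ⊔ (ofDual y.1.1.2 ⊔ L) = ⊤ ∧
       y.1.1.1 ≠ ⊤ ∧ ofDual y.1.1.2 ⊔ L ≠ ⊤) ∧ y.1.1.1 ≤ H ∧ V ≤ ofDual y.1.1.2 ⊔ L := by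
    rintro ⟨⟨⟨Z, W⟩, hmem⟩, hout⟩
    obtain ⟨h0, hh, hZH, hWH⟩ :
        Z ⊓ ofDual W = ⊥ ∧ Z ⊔ ofDual W = H ∧ Z ≠ H ∧ ofDual W ≠ H := hmem
    have hHVW : H ⊓ V ≤ ofDual W := hout
    have hZle : Z ≤ H := le_sup_left.trans hh.le
    have hWle : ofDual W ≤ H := le_sup_right.trans hh.le
    refine ⟨⟨?_, ?_, ?_, ?_⟩, hZle, ?_⟩
    · show Z ⊓ (ofDual W ⊔ L) = ⊥
      have hle : Z ⊓ (ofDual W ⊔ L) ≤ ofDual W :=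
        (le_inf inf_le_right (inf_le_left.trans hZle)).trans (key2 (ofDual W) hWle).le
      exact le_bot_iff.mp ((le_inf inf_le_left hle).trans h0.le)
    · show Z ⊔ (ofDual W ⊔ L) = ⊤
      rw [← sup_assoc, hh, hHLtop]
    · show Z ≠ ⊤
      intro h
      exact hZH (h.trans (top_le_iff.mp (h ▸ hZle)).symm)
    · show ofDual W ⊔ L ≠ ⊤
      intro h
      exact hWH (by rw [← key2 (ofDual W) hWle, h, top_inf_eq])
    · show V ≤ ofDual W ⊔ L
      have hV : V ⊓ H ⊔ L = V := by
        rw [inf_sup_assoc_of_le _ hLV, hHLtop, inf_top_eq]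
      rw [← hV]
      exact sup_le_sup_right ((inf_comm V H).le.trans hHVW) L
  have ext2 : ∀ (x y : {x : SPosetIn Λ M ⊤ // x.1.1 ≤ H ∧ V ≤ ofDual x.1.2}),
      x.1.1.1 = y.1.1.1 → ofDual x.1.1.2 = ofDual y.1.1.2 → x = y := by
    rintro ⟨⟨⟨a, b⟩, _⟩, _⟩ ⟨⟨⟨c, d⟩, _⟩, _⟩ h1 h2
    simp only at h1 h2
    subst h1; subst h2; rfl
  have ext2' : ∀ (x y : {y : SPosetIn Λ M H // H ⊓ V ≤ ofDual y.1.2}),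
      x.1.1.1 = y.1.1.1 → ofDual x.1.1.2 = ofDual y.1.1.2 → x = y := by
    rintro ⟨⟨⟨a, b⟩, _⟩, _⟩ ⟨⟨⟨c, d⟩, _⟩, _⟩ h1 h2
    simp only at h1 h2
    subst h1; subst h2; rfl
  refine ⟨{ toFun := fun x => ⟨⟨⟨x.1.1.1, toDual (ofDual x.1.1.2 ⊓ H)⟩, fwdmem x⟩,
              le_inf (inf_le_right.trans x.2.2) inf_le_left⟩,
            invFun := fun y => ⟨⟨⟨y.1.1.1, toDual (ofDual y.1.1.2 ⊔ L)⟩, (bwdmem y).1⟩,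
              (bwdmem y).2⟩,
            left_inv := ?_, right_inv := ?_, map_rel_iff' := ?_ },
          fun x => ⟨rfl, rfl⟩, fun y => ⟨rfl, rfl⟩⟩
  · intro x
    refine ext2 _ _ rfl ?_
    exact key1 _ (hLV.trans x.2.2)
  · intro y
    have hWle : ofDual y.1.1.2 ≤ H := le_sup_right.trans y.1.2.2.1.le
    refine ext2' _ _ rfl ?_
    exact key2 _ hWle
  · intro x y
    constructor
    · rintro ⟨h1, h2⟩
      have h1' : x.1.1.1 ≤ y.1.1.1 := h1
      have h2' : ofDual y.1.1.2 ⊓ H ≤ ofDual x.1.1.2 ⊓ H := h2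
      refine ⟨h1', ?_⟩
      show ofDual y.1.1.2 ≤ ofDual x.1.1.2
      calc ofDual y.1.1.2 = ofDual y.1.1.2 ⊓ H ⊔ L := (key1 _ (hLV.trans y.2.2)).symm
        _ ≤ ofDual x.1.1.2 ⊓ H ⊔ L := sup_le_sup_right h2' L
        _ = ofDual x.1.1.2 := key1 _ (hLV.trans x.2.2)
    · rintro ⟨h1, h2⟩
      have h2' : ofDual y.1.1.2 ≤ ofDual x.1.1.2 := h2
      refine ⟨h1, ?_⟩
      show ofDual y.1.1.2 ⊓ H ≤ ofDual x.1.1.2 ⊓ H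
      exact inf_le_inf_right H h2'
end

section
/- Let Λ be a Dedekind domain, M a finitely generated projective Λ-module of rank n, V a proper nonzero summand of M of rank k with k ≥ 2, and X = S_M(⊆, ⊇V). Let (A,B) ∈ X. Then the maps (P,Q) ↦ (P ⊓ B, Q) and (Z,W) ↦ (Z ⊕ A, W) are mutually inverse order isomorphisms between the upper link Link^>_X(A,B) = {(P,Q) ∈ X : A ⊊ P, Q ⊊ B} and the poset S_B(⊆, ⊇V) = {(Z,W) : Z, W proper summands of B, Z ⊕ W = B, W ⊇ V}. -/
open CategoryTheory OrderDual

section Filtration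

variable (Λ : Type) [CommRing Λ] (M : Type) [AddCommGroup M] [Module Λ M]

/-- The poset `X = S_M(⊆, ⊇V)` of pairs `(P, Q) ∈ S_M` with `Q ⊇ V`. -/
abbrev XT (V : Submodule Λ M) : Type :=
  {x : SPosetIn Λ M ⊤ // V ≤ ofDual x.1.2}

/-- `X₀ = S_M(⊆H, ⊇V)`, the set of `(P, Q) ∈ X` with `P ⊆ H`. -/
def X0set (V H : Submodule Λ M) : Set (XT Λ M V) :=
  {x | x.1.1.1 ≤ H}

/-- `T_j`, the set of `(A, B) ∈ X` with `rank A = n - k - 1 - j` and `A ⊄ H`. -/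
def Tset (V H : Submodule Λ M) (n k j : ℕ) : Set (XT Λ M V) :=
  {x | rk Λ ↥(x.1.1.1) = n - k - 1 - j ∧ ¬ x.1.1.1 ≤ H}

/-- `X_i = X₀ ∪ T₀ ∪ ⋯ ∪ T_i`. -/
def Xset (V H : Submodule Λ M) (n k i : ℕ) : Set (XT Λ M V) :=
  X0set Λ M V H ∪ ⋃ j ≤ i, Tset Λ M V H n k j

end Filtration

set_option maxHeartbeats 2000000 in
/-- Claim 2 (the isomorphism): `(P,Q) ↦ (P ⊓ B, Q)` and `(Z,W) ↦ (Z ⊔ A, W)` are mutually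
inverse order isomorphisms `Link^>_X(A,B) ≃o S_B(⊆, ⊇V)`. -/
theorem statement7 (Λ : Type) [CommRing Λ] [IsDedekindDomain Λ]
    (M : Type) [AddCommGroup M] [Module Λ M] [Module.Finite Λ M] [Module.Projective Λ M]
    (n : ℕ) (hn : rk Λ M = n) (k : ℕ) (V : Submodule Λ M) (hVsum : ∃ W, V ⊓ W = ⊥ ∧ V ⊔ W = ⊤)
    (hV0 : V ≠ ⊥) (hVtop : V ≠ ⊤) (hVrk : rk Λ ↥V = k) (hk2 : 2 ≤ k)
    (x : XT Λ M V) :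
    ∃ e : {y : XT Λ M V //
            x.1.1.1 < y.1.1.1 ∧ ofDual y.1.1.2 < ofDual x.1.1.2} ≃o
        {z : SPosetIn Λ M (ofDual x.1.1.2) // V ≤ ofDual z.1.2},
      (∀ y, (e y).1.1.1 = y.1.1.1.1 ⊓ ofDual x.1.1.2 ∧
        ofDual (e y).1.1.2 = ofDual y.1.1.1.2) ∧
      (∀ z, (e.symm z).1.1.1.1 = z.1.1.1 ⊔ x.1.1.1 ∧
        ofDual (e.symm z).1.1.1.2 = ofDual z.1.1.2) := by
  obtain ⟨⟨⟨A, B⟩, hAB, hsup, hA, hB⟩, hVB⟩ := x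
  simp only at *
  -- modular law consequences
  have modF1 : ∀ P : Submodule Λ M, A ≤ P → (P ⊓ ofDual B) ⊔ A = P := by
    intro P hAP
    rw [sup_comm, inf_comm, ← sup_inf_assoc_of_le _ hAP, hsup, top_inf_eq]
  have modF2 : ∀ Z : Submodule Λ M, Z ≤ ofDual B → (Z ⊔ A) ⊓ ofDual B = Z := by
    intro Z hZB
    rw [sup_inf_assoc_of_le _ hZB, hAB, sup_bot_eq]
  refine ⟨⟨⟨fun y => ⟨⟨(y.1.1.1.1 ⊓ ofDual B, y.1.1.1.2), ?_, ?_, ?_, ?_⟩, y.1.2⟩,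
      fun z => ⟨⟨⟨(z.1.1.1 ⊔ A, z.1.1.2), ?_, ?_, ?_, ?_⟩, z.2⟩, ?_, ?_⟩,
      ?_, ?_⟩, ?_⟩, fun y => ⟨rfl, rfl⟩, fun z => ⟨rfl, rfl⟩⟩
  · -- (P ⊓ B) ⊓ Q = ⊥
    have h := y.1.1.2.1
    exact le_bot_iff.mp (le_trans (inf_le_inf_right _ inf_le_left) h.le)
  · -- (P ⊓ B) ⊔ Q = B
    obtain ⟨hPQ, hPQt, hP, hQ⟩ := y.1.1.2
    have hQB : ofDual y.1.1.1.2 ≤ ofDual B := y.2.2.le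
    calc (y.1.1.1.1 ⊓ ofDual B) ⊔ ofDual y.1.1.1.2
        = ofDual y.1.1.1.2 ⊔ (y.1.1.1.1 ⊓ ofDual B) := sup_comm _ _
      _ = (ofDual y.1.1.1.2 ⊔ y.1.1.1.1) ⊓ ofDual B :=
          (sup_inf_assoc_of_le _ hQB).symm
      _ = ⊤ ⊓ ofDual B := by
          refine congrArg (· ⊓ ofDual B) ?_
          rw [sup_comm]; exact hPQt
      _ = ofDual B := by simp
  · -- P ⊓ B ≠ B
    obtain ⟨hPQ, hPQt, hP, hQ⟩ := y.1.1.2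
    intro hcon
    have hBP : ofDual B ≤ y.1.1.1.1 :=
      le_trans (le_of_eq hcon.symm) inf_le_left
    have hQbot : ofDual y.1.1.1.2 = ⊥ :=
      le_bot_iff.mp (le_trans (le_inf (y.2.2.le.trans hBP) le_rfl) hPQ.le)
    rw [hQbot, sup_bot_eq] at hPQt
    exact hP hPQt
  · -- Q ≠ B
    exact fun hcon => y.2.2.ne hcon
  · -- (Z ⊔ A) ⊓ W = ⊥
    obtain ⟨hZW, hZWs, hZ, hW⟩ := z.1.2
    have hWB : ofDual z.1.1.2 ≤ ofDual B := le_sup_right.trans hZWs.le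
    have hZB : z.1.1.1 ≤ ofDual B := le_sup_left.trans hZWs.le
    calc (z.1.1.1 ⊔ A) ⊓ ofDual z.1.1.2
        = (z.1.1.1 ⊔ A) ⊓ (ofDual B ⊓ ofDual z.1.1.2) := by
          rw [inf_eq_right.mpr hWB]
      _ = ((z.1.1.1 ⊔ A) ⊓ ofDual B) ⊓ ofDual z.1.1.2 := (inf_assoc _ _ _).symm
      _ = z.1.1.1 ⊓ ofDual z.1.1.2 := congrArg (· ⊓ ofDual z.1.1.2) (modF2 _ hZB)
      _ = ⊥ := hZW
  · -- (Z ⊔ A) ⊔ W = ⊤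
    obtain ⟨hZW, hZWs, hZ, hW⟩ := z.1.2
    calc (z.1.1.1 ⊔ A) ⊔ ofDual z.1.1.2
        = (z.1.1.1 ⊔ ofDual z.1.1.2) ⊔ A := sup_right_comm _ _ _
      _ = ofDual B ⊔ A := congrArg (· ⊔ A) hZWs
      _ = ⊤ := by rw [sup_comm]; exact hsup
  · -- Z ⊔ A ≠ ⊤
    obtain ⟨hZW, hZWs, hZ, hW⟩ := z.1.2
    intro hcon
    have hcon' : z.1.1.1 ⊔ A = ⊤ := hcon
    have hZB : z.1.1.1 ≤ ofDual B := le_sup_left.trans hZWs.le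
    have h := modF2 _ hZB
    rw [hcon', top_inf_eq] at h
    exact hZ h.symm
  · -- W ≠ ⊤
    obtain ⟨hZW, hZWs, hZ, hW⟩ := z.1.2
    intro hcon
    have hWB : ofDual z.1.1.2 ≤ ofDual B := le_sup_right.trans hZWs.le
    exact hB (top_le_iff.mp (le_trans hcon.ge hWB))
  · -- A < Z ⊔ A
    obtain ⟨hZW, hZWs, hZ, hW⟩ := z.1.2
    refine lt_of_le_of_ne le_sup_right fun hcon => ?_
    have hZA : z.1.1.1 ≤ A := le_sup_left.trans hcon.ge
    have hZB : z.1.1.1 ≤ ofDual B := le_sup_left.trans hZWs.le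
    have hZbot : z.1.1.1 = ⊥ :=
      le_bot_iff.mp (le_trans (le_inf hZA hZB) hAB.le)
    apply hW
    calc ofDual z.1.1.2 = z.1.1.1 ⊔ ofDual z.1.1.2 := by rw [hZbot, bot_sup_eq]
      _ = ofDual B := hZWs
  · -- W < B
    obtain ⟨hZW, hZWs, hZ, hW⟩ := z.1.2
    exact lt_of_le_of_ne (le_sup_right.trans hZWs.le) hW
  · -- left_inv
    intro y
    obtain ⟨hAP, hQB⟩ := y.2
    refine Subtype.ext (Subtype.ext (Subtype.ext ?_))
    exact Prod.ext (modF1 _ hAP.le) rfl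
  · -- right_inv
    intro z
    obtain ⟨hZW, hZWs, hZ, hW⟩ := z.1.2
    have hZB : z.1.1.1 ≤ ofDual B := le_sup_left.trans hZWs.le
    refine Subtype.ext (Subtype.ext ?_)
    exact Prod.ext (modF2 _ hZB) rfl
  · -- map_rel_iff'
    intro y y'
    simp only [Equiv.coe_fn_mk, Subtype.mk_le_mk, Prod.mk_le_mk]
    rw [← Subtype.coe_le_coe, ← Subtype.coe_le_coe, ← Subtype.coe_le_coe,
      Prod.le_def]
    constructor
    · rintro ⟨h1, h2⟩
      refine ⟨?_, h2⟩
      have hAP : A ≤ y.1.1.1.1 := y.2.1.le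
      have hAP' : A ≤ y'.1.1.1.1 := y'.2.1.le
      calc y.1.1.1.1 = (y.1.1.1.1 ⊓ ofDual B) ⊔ A := (modF1 _ hAP).symm
        _ ≤ (y'.1.1.1.1 ⊓ ofDual B) ⊔ A := sup_le_sup_right h1 A
        _ = y'.1.1.1.1 := modF1 _ hAP'
    · rintro ⟨h1, h2⟩
      exact ⟨inf_le_inf_right _ h1, h2⟩
end

section
/- Let Λ be a Dedekind domain, M a finitely generated projective Λ-module of rank n, V a proper nonzero summand of M of rank k with k ≥ 2, L a rank-1 summand of V, and H a rank-(n−1) summand of M with H ⊕ L = M. Set X = S_M(⊆, ⊇V), X₀ = {(P,Q) ∈ X : P ⊆ H}, T_j = {(A,B) ∈ X : rank(A) = n−k−1−j and A ⊄ H}, and X_i = X₀ ∪ T₀ ∪ ⋯ ∪ T_i. Then for every i ≥ 1 and every (A,B) ∈ T_i, one has Link^<_X(A,B) ∩ X_{i−1} = {(P,Q) ∈ X : P ⊆ A ⊓ H and Q ⊋ B}. -/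
open CategoryTheory OrderDual

lemma rk_mono {Λ : Type} [CommRing Λ] [IsDomain Λ] [IsNoetherianRing Λ]
    {M : Type} [AddCommGroup M] [Module Λ M] [Module.Finite Λ M]
    {P A : Submodule Λ M} (h : P ≤ A) : rk Λ P ≤ rk Λ A := by
  set K := FractionRing Λ
  haveI : IsNoetherian Λ M := isNoetherian_of_isNoetherianRing_of_finite Λ M
  haveI : Module.Finite Λ A := Module.Finite.iff_fg.mpr (IsNoetherian.noetherian A)
  have hinj : Function.Injective ((Submodule.inclusion h).baseChange K) := by
    have := Module.Flat.lTensor_preserves_injective_linearMap (M := K)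
      (Submodule.inclusion h) (Submodule.inclusion_injective h)
    simpa [LinearMap.baseChange_eq_ltensor] using this
  exact LinearMap.finrank_le_finrank_of_injective hinj

lemma rk_pos {Λ : Type} [CommRing Λ] [IsDomain Λ] [IsNoetherianRing Λ]
    {M : Type} [AddCommGroup M] [Module Λ M] [Module.Finite Λ M] [Module.Projective Λ M]
    {P : Submodule Λ M} (hP : P ≠ ⊥) : 1 ≤ rk Λ P := by
  set K := FractionRing Λ
  haveI : IsNoetherian Λ M := isNoetherian_of_isNoetherianRing_of_finite Λ M
  haveI : Module.Finite Λ P := Module.Finite.iff_fg.mpr (IsNoetherian.noetherian P)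
  haveI : Module.Flat Λ M := Module.Flat.of_projective
  haveI : Module.IsTorsionFree Λ M := inferInstance
  obtain ⟨p, hpP, hp0⟩ := Submodule.exists_mem_ne_zero_of_ne_bot hP
  have hinj : Function.Injective ((LinearMap.toSpanSingleton Λ P ⟨p, hpP⟩).baseChange K) := by
    have hinj0 : Function.Injective (LinearMap.toSpanSingleton Λ P ⟨p, hpP⟩) := by
      intro a b hab
      have : a • p = b • p := by
        have := congrArg (Subtype.val) hab
        simpa [LinearMap.toSpanSingleton_apply] using this
      exact smul_left_injective Λ hp0 (by simpa using this)
    have := Module.Flat.lTensor_preserves_injective_linearMap (M := K)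
      (LinearMap.toSpanSingleton Λ P ⟨p, hpP⟩) hinj0
    simpa [LinearMap.baseChange_eq_ltensor] using this
  have h1 : Module.finrank K (TensorProduct Λ K Λ) = 1 := by
    rw [(Algebra.TensorProduct.rid Λ K K).toLinearEquiv.finrank_eq]
    exact Module.finrank_self K
  calc 1 = Module.finrank K (TensorProduct Λ K Λ) := h1.symm
    _ ≤ rk Λ P := LinearMap.finrank_le_finrank_of_injective hinj



/-- Claim 3 (first part): for `(A,B) ∈ T_i` one has
`Link^<_X(A,B) ∩ X_(i-1) = {(P,Q) ∈ X : P ⊆ A ⊓ H, Q ⊋ B}`. -/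
theorem statement9 (Λ : Type) [CommRing Λ] [IsDedekindDomain Λ]
    (M : Type) [AddCommGroup M] [Module Λ M] [Module.Finite Λ M] [Module.Projective Λ M]
    (n : ℕ) (hn : rk Λ M = n) (k : ℕ) (V : Submodule Λ M) (hVsum : ∃ W, V ⊓ W = ⊥ ∧ V ⊔ W = ⊤)
    (hV0 : V ≠ ⊥) (hVtop : V ≠ ⊤) (hVrk : rk Λ ↥V = k) (hk2 : 2 ≤ k)
    (L : Submodule Λ M) (hLV : L ≤ V) (hLsum : ∃ L', L ⊓ L' = ⊥ ∧ L ⊔ L' = V)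
    (hLrk : rk Λ ↥L = 1)
    (H : Submodule Λ M) (hHrk : rk Λ ↥H = n - 1) (hHL : H ⊓ L = ⊥) (hHLtop : H ⊔ L = ⊤)
    (i : ℕ) (hi : 1 ≤ i) (x : XT Λ M V) (hx : x ∈ Tset Λ M V H n k i) :
    {y : XT Λ M V | y < x} ∩ Xset Λ M V H n k (i - 1) =
      {y : XT Λ M V | y.1.1.1 ≤ x.1.1.1 ⊓ H ∧ ofDual x.1.1.2 < ofDual y.1.1.2} := by
  
  obtain ⟨hxrk, hxH⟩ := hx
  have hA0 : x.1.1.1 ≠ ⊥ := fun h => hxH (le_of_eq_of_le h bot_le)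
  have hrkA1 : 1 ≤ rk Λ x.1.1.1 := rk_pos hA0
  ext y
  simp only [Set.mem_inter_iff, Set.mem_setOf_eq]
  constructor
  · rintro ⟨hlt, hmem⟩
    have hle : y.1.1 ≤ x.1.1 := hlt.le
    have hPA : y.1.1.1 ≤ x.1.1.1 := hle.1
    have hBQ : ofDual x.1.1.2 ≤ ofDual y.1.1.2 := hle.2
    have hBQlt : ofDual x.1.1.2 < ofDual y.1.1.2 := by
      rcases hBQ.lt_or_eq with h | h
      · exact h
      · exfalso
        have hm := sup_inf_assoc_of_le (α := Submodule Λ M) (ofDual x.1.1.2) hPA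
        rw [inf_comm (ofDual x.1.1.2) x.1.1.1, x.1.2.1, sup_bot_eq, h, y.1.2.2.1, top_inf_eq] at hm
        exact hlt.ne (Subtype.ext (Subtype.ext (Prod.ext hm.symm (congrArg toDual h).symm)))
    refine ⟨le_inf hPA ?_, hBQlt⟩
    simp only [Xset, Set.mem_union, Set.mem_iUnion, X0set, Tset, Set.mem_setOf_eq] at hmem
    rcases hmem with hy0 | ⟨j, hj, hyrk, hyH⟩
    · exact hy0
    · exfalso
      have hP0 : y.1.1.1 ≠ ⊥ := fun hb => hyH (le_of_eq_of_le hb bot_le)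
      have h1 : 1 ≤ rk Λ y.1.1.1 := rk_pos hP0
      have h2 : rk Λ y.1.1.1 ≤ rk Λ x.1.1.1 := rk_mono hPA
      omega
  · rintro ⟨hPAH, hBQ⟩
    have hle : y ≤ x := show y.1.1 ≤ x.1.1 from ⟨hPAH.trans inf_le_left, hBQ.le⟩
    refine ⟨lt_of_le_of_ne hle fun h => hBQ.ne (by rw [h]), Or.inl (hPAH.trans inf_le_right)⟩
end

section
/- Let Λ be a Dedekind domain, M a finitely generated projective Λ-module of rank n, V a proper nonzero summand of M of rank k with k ≥ 2, and H a rank-(n−1) summand of M with V ⊄ H. Let X = S_M(⊆, ⊇V) and let (A,B) ∈ X with A ⊄ H. Then the maps (P,Q) ↦ (P, Q ⊓ A) and (Z,W) ↦ (Z, W ⊕ B) are mutually inverse order isomorphisms between the poset {(P,Q) ∈ X : P ⊆ A ⊓ H, Q ⊋ B} and the poset S_A(⊆ H⊓A, ⊇) = {(Z,W) : Z, W proper summands of A, Z ⊕ W = A, Z ⊆ H ⊓ A}. -/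
open CategoryTheory OrderDual

/-- Claim 3 (the isomorphism): `(P,Q) ↦ (P, Q ⊓ A)` and `(Z,W) ↦ (Z, W ⊔ B)` are mutually
inverse order isomorphisms `{(P,Q) ∈ X : P ⊆ A ⊓ H, Q ⊋ B} ≃o S_A(⊆ H ⊓ A, ⊇)`. -/
theorem statement10 (Λ : Type) [CommRing Λ] [IsDedekindDomain Λ]
    (M : Type) [AddCommGroup M] [Module Λ M] [Module.Finite Λ M] [Module.Projective Λ M]
    (n : ℕ) (hn : rk Λ M = n) (k : ℕ) (V : Submodule Λ M) (hVsum : ∃ W, V ⊓ W = ⊥ ∧ V ⊔ W = ⊤)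
    (hV0 : V ≠ ⊥) (hVtop : V ≠ ⊤) (hVrk : rk Λ ↥V = k) (hk2 : 2 ≤ k)
    (H : Submodule Λ M) (hHsum : ∃ W, H ⊓ W = ⊥ ∧ H ⊔ W = ⊤) (hHrk : rk Λ ↥H = n - 1)
    (hVH : ¬ V ≤ H)
    (x : XT Λ M V) (hA : ¬ x.1.1.1 ≤ H) :
    ∃ e : {y : XT Λ M V //
            y.1.1.1 ≤ x.1.1.1 ⊓ H ∧ ofDual x.1.1.2 < ofDual y.1.1.2} ≃o
        {z : SPosetIn Λ M (x.1.1.1) // z.1.1 ≤ H ⊓ x.1.1.1},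
      (∀ y, (e y).1.1.1 = y.1.1.1.1 ∧
        ofDual (e y).1.1.2 = ofDual y.1.1.1.2 ⊓ x.1.1.1) ∧
      (∀ z, (e.symm z).1.1.1.1 = z.1.1.1 ∧
        ofDual (e.symm z).1.1.1.2 = ofDual z.1.1.2 ⊔ ofDual x.1.1.2) := by
  obtain ⟨⟨⟨A, B⟩, hAB, hABt, hAne, hBne⟩, hVB⟩ := x
  simp only at hA hAB hABt hAne hBne hVB ⊢
  set b : Submodule Λ M := ofDual B with hb
  -- modular lattice key identities
  have key1 : ∀ Q : Submodule Λ M, b ≤ Q → (Q ⊓ A) ⊔ b = Q := by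
    intro Q hQ
    rw [sup_comm, inf_comm, ← sup_inf_assoc_of_le A hQ, sup_comm, hABt, top_inf_eq]
  have key2 : ∀ W : Submodule Λ M, W ≤ A → (W ⊔ b) ⊓ A = W := by
    intro W hW
    rw [sup_inf_assoc_of_le b hW, inf_comm, hAB, sup_bot_eq]
  have hHne : H ≠ ⊤ := fun h => hVH (h ▸ le_top)
  refine ⟨⟨⟨fun y => ⟨⟨⟨y.1.1.1.1, toDual (ofDual y.1.1.1.2 ⊓ A)⟩, ?_, ?_, ?_, ?_⟩, ?_⟩,
      fun z => ⟨⟨⟨⟨z.1.1.1, toDual (ofDual z.1.1.2 ⊔ b)⟩, ?_, ?_, ?_, ?_⟩, ?_⟩, ?_, ?_⟩,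
      ?_, ?_⟩, ?_⟩, fun y => ⟨rfl, rfl⟩, fun z => ⟨rfl, rfl⟩⟩
  -- forward map well-defined
  · exact eq_bot_iff.mpr ((inf_le_inf_left _ inf_le_left).trans y.1.1.2.1.le)
  · have hPA : y.1.1.1.1 ≤ A := y.2.1.trans inf_le_left
    show y.1.1.1.1 ⊔ (ofDual y.1.1.1.2 ⊓ A) = A
    rw [← sup_inf_assoc_of_le _ hPA, y.1.1.2.2.1, top_inf_eq]
  · intro h
    exact hA (h ▸ (y.2.1.trans inf_le_right))
  · show ofDual y.1.1.1.2 ⊓ A ≠ A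
    rw [Ne, inf_eq_right]
    intro h
    refine y.1.1.2.2.2.2 (top_le_iff.mp ?_)
    exact le_trans (le_of_eq hABt.symm) (sup_le h y.2.2.le)
  · exact le_inf (y.2.1.trans inf_le_right) (y.2.1.trans inf_le_left)
  -- inverse map well-defined
  · have hZA : z.1.1.1 ≤ A := z.2.trans inf_le_right
    have hWA : ofDual z.1.1.2 ≤ A := le_sup_right.trans_eq z.1.2.2.1
    refine eq_bot_iff.mpr (le_trans (le_inf inf_le_left ?_) z.1.2.1.le)
    calc z.1.1.1 ⊓ (ofDual z.1.1.2 ⊔ b)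
        ≤ (ofDual z.1.1.2 ⊔ b) ⊓ A := le_inf inf_le_right (inf_le_left.trans hZA)
      _ = ofDual z.1.1.2 := key2 _ hWA
  · show z.1.1.1 ⊔ (ofDual z.1.1.2 ⊔ b) = ⊤
    rw [← sup_assoc, z.1.2.2.1, hABt]
  · intro h
    exact hHne (top_le_iff.mp (h ▸ (z.2.trans inf_le_left)))
  · show ofDual z.1.1.2 ⊔ b ≠ ⊤
    intro h
    have hWA : ofDual z.1.1.2 ≤ A := le_sup_right.trans_eq z.1.2.2.1
    have hk := key2 _ hWA
    rw [h, top_inf_eq] at hk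
    exact z.1.2.2.2.2 hk.symm
  · exact hVB.trans le_sup_right
  · exact le_inf (z.2.trans inf_le_right) (z.2.trans inf_le_left)
  · show b < ofDual z.1.1.2 ⊔ b
    refine lt_of_le_of_ne le_sup_right fun h => ?_
    have hWA : ofDual z.1.1.2 ≤ A := le_sup_right.trans_eq z.1.2.2.1
    have hWb : ofDual z.1.1.2 ≤ b := le_sup_left.trans h.ge
    have hWbot : ofDual z.1.1.2 = ⊥ := le_bot_iff.mp (le_trans (le_inf hWA hWb) hAB.le)
    have hk := z.1.2.2.1
    rw [hWbot, sup_bot_eq] at hk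
    exact z.1.2.2.2.1 hk
  -- left inverse
  · intro y
    refine Subtype.ext (Subtype.ext (Subtype.ext (Prod.ext rfl ?_)))
    exact congrArg toDual (key1 _ y.2.2.le)
  -- right inverse
  · intro z
    refine Subtype.ext (Subtype.ext (Prod.ext rfl ?_))
    have hWA : ofDual z.1.1.2 ≤ A := le_sup_right.trans_eq z.1.2.2.1
    exact congrArg toDual (key2 _ hWA)
  -- order iso
  · intro y₁ y₂
    show (_ ∧ _) ↔ (_ ∧ _)
    constructor
    · rintro ⟨h1, h2⟩
      have h2' : ofDual y₂.1.1.1.2 ⊓ A ≤ ofDual y₁.1.1.1.2 ⊓ A := h2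
      refine ⟨h1, ?_⟩
      show ofDual y₂.1.1.1.2 ≤ ofDual y₁.1.1.1.2
      rw [← key1 _ y₂.2.2.le, ← key1 _ y₁.2.2.le]
      exact sup_le_sup_right h2' b
    · rintro ⟨h1, h2⟩
      have h2' : ofDual y₂.1.1.1.2 ≤ ofDual y₁.1.1.1.2 := h2
      exact ⟨h1, show ofDual y₂.1.1.1.2 ⊓ A ≤ ofDual y₁.1.1.1.2 ⊓ A from inf_le_inf_right A h2'⟩
end

section
/- Let Λ be a Dedekind domain, M a finitely generated projective Λ-module of rank n, and V a proper nonzero summand of M of rank k. Then the height of V in the opposite poset T_M^op of the poset T_M of proper nonzero summands of M ordered by inclusion equals n−k−1; equivalently, the maximal length h of a chain of proper nonzero summands A_0 ⊋ A_1 ⊋ ⋯ ⊋ A_h = V of M is h = n−k−1. -/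
open CategoryTheory OrderDual

section AuxProofs

open Module

/-- Transfer `NoZeroSMulDivisors` along an injective linear map. -/
theorem aux_nzsd_of_inj {Λ M N : Type*} [CommRing Λ] [AddCommGroup M] [Module Λ M]
    [AddCommGroup N] [Module Λ N] [NoZeroSMulDivisors Λ N] (f : M →ₗ[Λ] N)
    (hf : Function.Injective f) : NoZeroSMulDivisors Λ M := by
  constructor
  intro a x h
  have h2 : a • f x = 0 := by rw [← map_smul, h, map_zero]
  rcases eq_zero_or_eq_zero_of_smul_eq_zero h2 with h3 | h3
  · exact Or.inl h3
  · exact Or.inr (hf (by rw [h3, map_zero]))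

theorem aux_nzsd_of_tf (R N : Type*) [CommRing R] [IsDomain R] [AddCommGroup N] [Module R N]
    [Module.IsTorsionFree R N] : NoZeroSMulDivisors R N :=
  ⟨fun h => (Module.isTorsionFree_iff_smul_eq_zero.mp inferInstance) _ _ h⟩

theorem aux_tf_of_nzsd (R N : Type*) [CommRing R] [IsDomain R] [AddCommGroup N] [Module R N]
    [NoZeroSMulDivisors R N] : Module.IsTorsionFree R N :=
  Module.isTorsionFree_iff_smul_eq_zero.mpr fun _ _ h => eq_zero_or_eq_zero_of_smul_eq_zero h

theorem aux_rk_eq_finrank (Λ : Type) [CommRing Λ] [IsDomain Λ] (N : Type) [AddCommGroup N]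
    [Module Λ N] : rk Λ N = Module.finrank Λ N := by
  haveI : IsLocalizedModule (nonZeroDivisors Λ) (TensorProduct.mk Λ (FractionRing Λ) N 1) :=
    (isLocalizedModule_iff_isBaseChange (nonZeroDivisors Λ) (FractionRing Λ) _).mpr
      (TensorProduct.isBaseChange Λ N (FractionRing Λ))
  have h := (TensorProduct.isBaseChange Λ N (FractionRing Λ)).rank_eq
  unfold rk
  rw [Module.finrank, Module.finrank, h]

theorem aux_nzsd_of_projective (Λ : Type) [CommRing Λ] [IsDomain Λ] (M : Type) [AddCommGroup M]
    [Module Λ M] [Module.Projective Λ M] : NoZeroSMulDivisors Λ M := by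
  obtain ⟨s, hs⟩ := Module.Projective.out (R := Λ) (P := M)
  haveI : NoZeroSMulDivisors Λ (M →₀ Λ) := aux_nzsd_of_tf _ _
  exact aux_nzsd_of_inj s hs.injective

theorem aux_nzsd_localized (Λ : Type) [CommRing Λ] [IsDomain Λ] (P : Ideal Λ) [P.IsPrime]
    (N : Type) [AddCommGroup N] [Module Λ N] [NoZeroSMulDivisors Λ N] :
    NoZeroSMulDivisors (Localization P.primeCompl) (LocalizedModule P.primeCompl N) := by
  constructor
  intro a x h
  induction a using Localization.induction_on with
  | H rs =>
    obtain ⟨r, s⟩ := rs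
    induction x using LocalizedModule.induction_on with
    | h m t =>
      rw [LocalizedModule.mk_smul_mk] at h
      by_cases hr : r = 0
      · left
        rw [hr]
        exact Localization.mk_zero s
      · right
        rw [show (0 : LocalizedModule P.primeCompl N) = LocalizedModule.mk 0 1 from
          (LocalizedModule.zero_mk 1).symm, LocalizedModule.mk_eq] at h
        obtain ⟨u, hu⟩ := h
        simp only [smul_zero, one_smul] at hu
        have hu0 : (u : Λ) ≠ 0 := fun h0 => u.2 (h0 ▸ P.zero_mem)
        have : ((u : Λ) * r) • m = 0 := by
          rw [mul_smul]
          simpa [Submonoid.smul_def] using hu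
        have hm : m = 0 := by
          rcases eq_zero_or_eq_zero_of_smul_eq_zero this with h' | h'
          · exact absurd h' (mul_ne_zero hu0 hr)
          · exact h'
        rw [hm, LocalizedModule.zero_mk]

theorem aux_projective (Λ : Type) [CommRing Λ] [IsDedekindDomain Λ] (N : Type) [AddCommGroup N]
    [Module Λ N] [Module.Finite Λ N] [NoZeroSMulDivisors Λ N] : Module.Projective Λ N := by
  by_cases H : IsField Λ
  · letI := H.toField
    haveI : Module.Free Λ N := Module.free_of_finite_type_torsion_free'
    infer_instance
  · haveI : Module.FinitePresentation Λ N := Module.finitePresentation_of_finite Λ N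
    apply Module.projective_of_localization_maximal
    intro P hP
    have hPbot : P ≠ ⊥ := (Ideal.bot_lt_of_maximal P H).ne'
    haveI : P.IsPrime := hP.isPrime
    haveI : IsDomain (Localization.AtPrime P) :=
      IsLocalization.isDomain_localization P.primeCompl_le_nonZeroDivisors
    haveI : IsDiscreteValuationRing (Localization.AtPrime P) :=
      IsLocalization.AtPrime.isDiscreteValuationRing_of_dedekind_domain Λ hPbot _
    haveI : Module.Finite (Localization.AtPrime P) (LocalizedModule P.primeCompl N) :=
      Module.Finite.of_isLocalizedModule P.primeCompl
        (LocalizedModule.mkLinearMap P.primeCompl N)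
    haveI : NoZeroSMulDivisors (Localization.AtPrime P) (LocalizedModule P.primeCompl N) :=
      aux_nzsd_localized Λ P N
    haveI := aux_tf_of_nzsd (Localization.AtPrime P) (LocalizedModule P.primeCompl N)
    haveI : Module.Free (Localization.AtPrime P) (LocalizedModule P.primeCompl N) :=
      Module.free_of_finite_type_torsion_free'
    infer_instance

section Main

variable {Λ : Type} [CommRing Λ] [IsDedekindDomain Λ]
variable {M : Type} [AddCommGroup M] [Module Λ M] [Module.Finite Λ M] [NoZeroSMulDivisors Λ M]

omit [NoZeroSMulDivisors Λ M] in
theorem aux_fin (A : Submodule Λ M) : Module.Finite Λ ↥A :=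
  Module.Finite.iff_fg.mpr (IsNoetherian.noetherian A)

omit [NoZeroSMulDivisors Λ M] in
theorem aux_add {A B : Submodule Λ M} (h1 : A ⊓ B = ⊥) (h2 : A ⊔ B = ⊤) :
    finrank Λ ↥A + finrank Λ ↥B = finrank Λ M := by
  have h := Submodule.rank_sup_add_rank_inf_eq A B
  rw [h1, h2, rank_bot, rank_top, add_zero] at h
  rw [← Submodule.finrank_eq_rank, ← Submodule.finrank_eq_rank,
    ← Module.finrank_eq_rank] at h
  exact_mod_cast h.symm

theorem aux_pos {A : Submodule Λ M} (hA : A ≠ ⊥) : 0 < finrank Λ ↥A := by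
  haveI := aux_fin A
  haveI : Nontrivial ↥A := Submodule.nontrivial_iff_ne_bot.mpr hA
  exact Module.finrank_pos

theorem aux_strict {A B : Submodule Λ M} (h : A < B) {C : Submodule Λ M}
    (h1 : A ⊓ C = ⊥) (h2 : A ⊔ C = ⊤) : finrank Λ ↥A < finrank Λ ↥B := by
  haveI := aux_fin B
  set A' : Submodule Λ ↥B := A.comap B.subtype with hA'def
  have e1 := Submodule.finrank_quotient_add_finrank (R := Λ) (M := ↥B) A'
  have e2 : finrank Λ ↥A' = finrank Λ ↥A :=
    LinearEquiv.finrank_eq (Submodule.comapSubtypeEquivOfLe h.le)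
  have hker : LinearMap.ker (A.mkQ ∘ₗ B.subtype) = A' := by
    ext x
    simp [Submodule.mem_comap, LinearMap.mem_ker, Submodule.Quotient.mk_eq_zero, hA'def]
  let f := A'.liftQ (A.mkQ ∘ₗ B.subtype) hker.ge
  have hf : Function.Injective f := by
    rw [← LinearMap.ker_eq_bot]
    exact Submodule.ker_liftQ_eq_bot A' _ _ hker.le
  have hcompl : IsCompl A C := ⟨disjoint_iff.mpr h1, codisjoint_iff.mpr h2⟩
  haveI : NoZeroSMulDivisors Λ ↥C := aux_nzsd_of_inj C.subtype C.injective_subtype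
  haveI : NoZeroSMulDivisors Λ (M ⧸ A) :=
    aux_nzsd_of_inj (Submodule.quotientEquivOfIsCompl A C hcompl).toLinearMap
      (Submodule.quotientEquivOfIsCompl A C hcompl).injective
  haveI : NoZeroSMulDivisors Λ (↥B ⧸ A') := aux_nzsd_of_inj f hf
  haveI : Nontrivial (↥B ⧸ A') := by
    refine Submodule.Quotient.nontrivial_iff.mpr (ne_of_lt ?_)
    obtain ⟨x, hxB, hxA⟩ := SetLike.exists_of_lt h
    refine lt_top_iff_ne_top.mpr fun ht => hxA ?_
    have hx : (⟨x, hxB⟩ : ↥B) ∈ A' := ht.symm ▸ Submodule.mem_top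
    simpa [hA'def, Submodule.mem_comap] using hx
  have hpos : 0 < finrank Λ (↥B ⧸ A') := Module.finrank_pos
  omega

theorem aux_sat (L : Submodule Λ M) :
    L ≤ (Submodule.torsion Λ (M ⧸ L)).comap L.mkQ ∧
    finrank Λ ↥((Submodule.torsion Λ (M ⧸ L)).comap L.mkQ) = finrank Λ ↥L ∧
    NoZeroSMulDivisors Λ (M ⧸ (Submodule.torsion Λ (M ⧸ L)).comap L.mkQ) := by
  set T := Submodule.torsion Λ (M ⧸ L) with hT
  set L' := T.comap L.mkQ with hL'
  have hle : L ≤ L' := by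
    intro x hx
    simp only [hL', Submodule.mem_comap, Submodule.mkQ_apply]
    rw [(Submodule.Quotient.mk_eq_zero L).mpr hx]
    exact zero_mem T
  have hmap : L'.map L.mkQ = T := by
    rw [hL', Submodule.map_comap_eq, Submodule.range_mkQ, top_inf_eq]
  let e : ((M ⧸ L) ⧸ L'.map L.mkQ) ≃ₗ[Λ] M ⧸ L' :=
    Submodule.quotientQuotientEquivQuotient L L' hle
  have hnz : NoZeroSMulDivisors Λ (M ⧸ L') := by
    haveI : NoZeroSMulDivisors Λ ((M ⧸ L) ⧸ L'.map L.mkQ) := by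
      rw [hmap, hT]
      exact aux_nzsd_of_tf _ _
    exact aux_nzsd_of_inj e.symm.toLinearMap e.symm.injective
  haveI : Module.Finite Λ ↥T := aux_fin (M := M ⧸ L) T
  have hT0 : finrank Λ ↥T = 0 := by
    rw [Module.finrank_eq_zero_iff]
    intro x
    obtain ⟨a, ha⟩ := (Submodule.mem_torsion_iff (R := Λ) (x := (x : M ⧸ L))).mp (hT ▸ x.2)
    exact ⟨a, nonZeroDivisors.coe_ne_zero a, Subtype.ext ha⟩
  have e2 := Submodule.finrank_quotient_add_finrank (R := Λ) (M := M) L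
  have e3 := Submodule.finrank_quotient_add_finrank (R := Λ) (M := M) L'
  have e4 := Submodule.finrank_quotient_add_finrank (R := Λ) (M := M ⧸ L) T
  have e5 : finrank Λ ((M ⧸ L) ⧸ T) = finrank Λ (M ⧸ L') := by
    rw [← hmap]
    exact LinearEquiv.finrank_eq e
  exact ⟨hle, by omega, hnz⟩

theorem aux_span_rank {w : M} (hw : w ≠ 0) : finrank Λ ↥(Submodule.span Λ {w}) = 1 := by
  have e := LinearEquiv.toSpanNonzeroSingleton Λ M w hw
  rw [show Submodule.span Λ {w} = (Λ ∙ w) from rfl, ← LinearEquiv.finrank_eq e,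
    Module.finrank_self]

theorem aux_step {A B : Submodule Λ M} (h1 : A ⊓ B = ⊥) (h2 : A ⊔ B = ⊤) (hAt : A ≠ ⊤)
    (hcond : finrank Λ ↥A + 2 ≤ finrank Λ M) :
    ∃ A' : Submodule Λ M, A < A' ∧ (∃ B', A' ⊓ B' = ⊥ ∧ A' ⊔ B' = ⊤) ∧ A' ≠ ⊤ ∧
      finrank Λ ↥A' = finrank Λ ↥A + 1 := by
  have hB : B ≠ ⊥ := by
    rintro rfl
    rw [sup_bot_eq] at h2
    exact hAt h2
  obtain ⟨w, hwB, hw0⟩ := B.ne_bot_iff.mp hB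
  set L := A ⊔ Submodule.span Λ {w} with hLdef
  have hinf : A ⊓ Submodule.span Λ {w} = ⊥ := by
    rw [eq_bot_iff]
    rintro x hx
    obtain ⟨hxA, hxw⟩ := Submodule.mem_inf.mp hx
    rw [Submodule.mem_span_singleton] at hxw
    obtain ⟨a, rfl⟩ := hxw
    have hab : a • w ∈ A ⊓ B := Submodule.mem_inf.mpr ⟨hxA, B.smul_mem a hwB⟩
    rw [h1] at hab
    exact hab
  have hrankL : finrank Λ ↥L = finrank Λ ↥A + 1 := by
    have h := Submodule.rank_sup_add_rank_inf_eq A (Submodule.span Λ {w})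
    rw [hinf, rank_bot, add_zero] at h
    rw [← Submodule.finrank_eq_rank, ← Submodule.finrank_eq_rank,
      ← Submodule.finrank_eq_rank] at h
    have h' : finrank Λ ↥L = finrank Λ ↥A + finrank Λ ↥(Submodule.span Λ {w}) := by
      exact_mod_cast h
    rw [h', aux_span_rank hw0]
  set A' := (Submodule.torsion Λ (M ⧸ L)).comap L.mkQ with hA'def
  obtain ⟨hle, hrk, hnz⟩ := aux_sat L
  have hwA : w ∉ A := by
    intro hwA
    have : w ∈ A ⊓ B := Submodule.mem_inf.mpr ⟨hwA, hwB⟩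
    rw [h1, Submodule.mem_bot] at this
    exact hw0 this
  have hAA' : A < A' := by
    refine lt_of_le_of_ne (le_trans le_sup_left hle) fun hEq => hwA ?_
    rw [hEq]
    exact hle (Submodule.mem_sup_right (Submodule.mem_span_singleton_self w))
  have hrkA' : finrank Λ ↥A' = finrank Λ ↥A + 1 := by rw [hrk, hrankL]
  have hA't : A' ≠ ⊤ := by
    intro ht
    rw [ht, finrank_top] at hrkA'
    omega
  haveI : NoZeroSMulDivisors Λ (M ⧸ A') := hnz
  haveI : Module.Projective Λ (M ⧸ A') := aux_projective Λ (M ⧸ A')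
  obtain ⟨g, hg⟩ := Module.projective_lifting_property A'.mkQ LinearMap.id A'.mkQ_surjective
  have hgy : ∀ y, A'.mkQ (g y) = y := fun y => by
    have := congrArg (fun f => f y) hg
    simpa using this
  refine ⟨A', hAA', ⟨LinearMap.range g, ?_, ?_⟩, hA't, hrkA'⟩
  · rw [eq_bot_iff]
    rintro x hx
    obtain ⟨hx1, hx2⟩ := Submodule.mem_inf.mp hx
    obtain ⟨y, rfl⟩ := hx2
    have h0 : A'.mkQ (g y) = 0 := by
      rw [Submodule.mkQ_apply, Submodule.Quotient.mk_eq_zero]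
      exact hx1
    rw [hgy y] at h0
    rw [h0, map_zero]
    exact Submodule.zero_mem ⊥
  · rw [eq_top_iff]
    rintro x -
    have hx : x - g (A'.mkQ x) ∈ A' := by
      rw [← Submodule.Quotient.mk_eq_zero A', ← Submodule.mkQ_apply, map_sub, hgy, sub_self]
    refine Submodule.mem_sup.mpr ⟨x - g (A'.mkQ x), hx, g (A'.mkQ x), ⟨A'.mkQ x, rfl⟩, ?_⟩
    abel

theorem aux_proper_bound {A B : Submodule Λ M} (h1 : A ⊓ B = ⊥) (h2 : A ⊔ B = ⊤)
    (hAt : A ≠ ⊤) : finrank Λ ↥A + 1 ≤ finrank Λ M := by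
  have hB : B ≠ ⊥ := by
    rintro rfl
    rw [sup_bot_eq] at h2
    exact hAt h2
  have := aux_add h1 h2
  have := aux_pos hB
  omega

end Main

end AuxProofs

/-- The height of a rank-`k` proper nonzero summand `V` in `T_M^op` is `n - k - 1`. -/
theorem statement14 (Λ : Type) [CommRing Λ] [IsDedekindDomain Λ]
    (M : Type) [AddCommGroup M] [Module Λ M] [Module.Finite Λ M] [Module.Projective Λ M]
    (n : ℕ) (hn : rk Λ M = n) (k : ℕ) (V : Submodule Λ M) (hVsum : ∃ W, V ⊓ W = ⊥ ∧ V ⊔ W = ⊤)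
    (hV0 : V ≠ ⊥) (hVtop : V ≠ ⊤) (hVrk : rk Λ ↥V = k) :
    Order.height (toDual (⟨V, hVsum, hV0, hVtop⟩ : TPoset Λ M)) = ((n - k - 1 : ℕ) : ℕ∞) := by
  classical
  haveI : NoZeroSMulDivisors Λ M := aux_nzsd_of_projective Λ M
  have hfM : Module.finrank Λ M = n := by rw [← aux_rk_eq_finrank]; exact hn
  have hfV : Module.finrank Λ ↥V = k := by rw [← aux_rk_eq_finrank]; exact hVrk
  obtain ⟨W, hVW1, hVW2⟩ := id hVsum
  have hk1 : 1 ≤ k := by have := aux_pos hV0; omega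
  have hkn : k + 1 ≤ n := by
    have := aux_proper_bound hVW1 hVW2 hVtop
    omega
  rw [Order.height_toDual]
  have hF : StrictMono (fun A : TPoset Λ M => Module.finrank Λ ↥A.1) := by
    intro a b hab
    obtain ⟨C, hC1, hC2⟩ := a.2.1
    exact aux_strict (Subtype.coe_lt_coe.mpr hab) hC1 hC2
  apply le_antisymm
  · apply Order.coheight_le
    intro p hp
    have hmap := LTSeries.head_add_length_le_nat (p.map _ hF)
    have hhead : Module.finrank Λ ↥(p.head).1 = k := by rw [hp]; exact hfV
    obtain ⟨C, hC1, hC2⟩ := (p.last).2.1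
    have hlast := aux_proper_bound hC1 hC2 (p.last).2.2.2
    rw [hfM] at hlast
    rw [LTSeries.head_map, LTSeries.last_map] at hmap
    rw [hhead] at hmap
    have hlen : (p.map _ hF).length = p.length := rfl
    rw [hlen] at hmap
    have hfin : p.length ≤ n - k - 1 := by omega
    exact_mod_cast hfin
  · have key : ∀ j (A : Submodule Λ M), (∃ B, A ⊓ B = ⊥ ∧ A ⊔ B = ⊤) → A ≠ ⊥ →
        A ≠ ⊤ → Module.finrank Λ ↥A + j + 1 ≤ n →
        ∃ p : LTSeries (TPoset Λ M), (p.head).1 = A ∧ p.length = j := by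
      intro j
      induction j with
      | zero =>
        intro A hA hA0 hAt _
        exact ⟨RelSeries.singleton _ ⟨A, hA, hA0, hAt⟩, rfl, rfl⟩
      | succ j ih =>
        intro A hA hA0 hAt hj
        obtain ⟨B, hB1, hB2⟩ := hA
        obtain ⟨A', hAA', hA'sum, hA't, hA'rk⟩ :=
          aux_step hB1 hB2 hAt (by rw [hfM]; omega)
        have hA'0 : A' ≠ ⊥ := by
          intro h
          exact hA0 (le_bot_iff.mp (h ▸ hAA'.le))
        obtain ⟨p, hp1, hp2⟩ := ih A' hA'sum hA'0 hA't (by rw [hA'rk]; omega)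
        have hrel : (⟨A, ⟨B, hB1, hB2⟩, hA0, hAt⟩ : TPoset Λ M) < p.head := by
          rw [← Subtype.coe_lt_coe, hp1]
          exact hAA'
        refine ⟨p.cons ⟨A, ⟨B, hB1, hB2⟩, hA0, hAt⟩ hrel, ?_, ?_⟩
        · rw [RelSeries.head_cons]
        · simp [hp2]
    obtain ⟨p, hp1, hp2⟩ := key (n - k - 1) V hVsum hV0 hVtop (by rw [hfV]; omega)
    have hhead : p.head = (⟨V, hVsum, hV0, hVtop⟩ : TPoset Λ M) := Subtype.ext hp1
    calc ((n - k - 1 : ℕ) : ℕ∞) = (p.length : ℕ∞) := by rw [hp2]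
      _ ≤ Order.coheight (⟨V, hVsum, hV0, hVtop⟩ : TPoset Λ M) :=
        Order.length_le_coheight (le_of_eq hhead.symm)
end
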